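/- Let m, n be real numbers with m > n > 0. Let (C_l, H_l) and (C_r, H_r) be states with H_l > 0, φ_l := 1 - C_l + H_l > 0 and φ_r := 1 - C_r + H_r > 0. Define the intermediate state by H_i = H_l * (φ_l / φ_r)^((m-n)/n) and C_i = H_i + C_r - H_r. Then: (i) 1 - C_i + H_i = φ_r, so the intermediate state has the same porosity as the right state and lies on the fast path through (C_r, H_r); and (ii) H_i^n * (1 - C_i + H_i)^(m-n) = H_l^n * φ_l^(m-n), so the intermediate state carries the same flux as the left state (it lies on the slow path through (C_l, H_l)). -/
import Mathlib


/-- The intermediate state `H_i = H_l * (φ_l/φ_r)^((m-n)/n)`, `C_i = H_i + C_r - H_r`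
(i) has the same porosity as the right state (fast path through `(C_r, H_r)`), and
(ii) carries the same flux as the left state (slow path through `(C_l, H_l)`). -/
theorem intermediate_state_porosity_and_flux (m n Cl Hl Cr Hr : ℝ)
    (hmn : n < m) (hn : 0 < n) (hHl : 0 < Hl)
    (hφl : 0 < 1 - Cl + Hl) (hφr : 0 < 1 - Cr + Hr) :
    (1 - (Hl * ((1 - Cl + Hl) / (1 - Cr + Hr)) ^ ((m - n) / n) + Cr - Hr) +
        Hl * ((1 - Cl + Hl) / (1 - Cr + Hr)) ^ ((m - n) / n) = 1 - Cr + Hr) ∧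
    ((Hl * ((1 - Cl + Hl) / (1 - Cr + Hr)) ^ ((m - n) / n)) ^ n *
        (1 - (Hl * ((1 - Cl + Hl) / (1 - Cr + Hr)) ^ ((m - n) / n) + Cr - Hr) +
          Hl * ((1 - Cl + Hl) / (1 - Cr + Hr)) ^ ((m - n) / n)) ^ (m - n) =
      Hl ^ n * (1 - Cl + Hl) ^ (m - n)) := by
  have h1 : (1 - (Hl * ((1 - Cl + Hl) / (1 - Cr + Hr)) ^ ((m - n) / n) + Cr - Hr) +
      Hl * ((1 - Cl + Hl) / (1 - Cr + Hr)) ^ ((m - n) / n) = 1 - Cr + Hr) := by ring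
  refine ⟨h1, ?_⟩
  rw [h1]
  have hq : (0:ℝ) < (1 - Cl + Hl) / (1 - Cr + Hr) := div_pos hφl hφr
  rw [Real.mul_rpow hHl.le (Real.rpow_pos_of_pos hq _).le, ← Real.rpow_mul hq.le,
    div_mul_cancel₀ _ hn.ne', Real.div_rpow hφl.le hφr.le]
  have hφrn : (1 - Cr + Hr) ^ (m - n) ≠ 0 := (Real.rpow_pos_of_pos hφr _).ne'
  field_simp
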